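/- Let R be a commutative ring with a positive cone R⁺ (closed under addition and multiplication, 0 ∉ R⁺, and R = R⁺ ∪ {0} ∪ (−R⁺) need not hold), and let I be a gauge ideal (I ∩ R⁺ = ∅, and for every S ∉ I there is P ∈ R⁺ with S + P ∈ I or S − P ∈ I). Then the quotient R/I is a linearly ordered ring where the positive elements are exactly the cosets P + I with P ∈ R⁺. -/

import Mathlib

theorem gauge_quotient_ordered_ring {R : Type*} [CommRing R]
    (Rp : Set R)
    (hadd : ∀ x ∈ Rp, ∀ y ∈ Rp, x + y ∈ Rp)
    (hmul : ∀ x ∈ Rp, ∀ y ∈ Rp, x * y ∈ Rp)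
    (h0 : (0 : R) ∉ Rp)
    (I : Ideal R)
    (hdisj : ∀ x ∈ Rp, x ∉ I)
    (hgauge : ∀ S : R, S ∉ I → ∃ P ∈ Rp, S + P ∈ I ∨ S - P ∈ I) :
    ∃ lt : (R ⧸ I) → (R ⧸ I) → Prop,
      (∀ x y : R ⧸ I, lt x y ↔ ∃ P ∈ Rp, y = x + Ideal.Quotient.mk I P) ∧
      IsStrictTotalOrder (R ⧸ I) lt ∧
      (∀ x y z : R ⧸ I, lt x y → lt (x + z) (y + z)) ∧
      (∀ x y : R ⧸ I, lt 0 x → lt 0 y → lt 0 (x * y)) ∧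
      (∀ x : R ⧸ I, lt 0 x ↔ ∃ P ∈ Rp, x = Ideal.Quotient.mk I P) := by
  set f := Ideal.Quotient.mk I with hf
  have hirr : ∀ x : R ⧸ I, ¬ ∃ P ∈ Rp, x = x + f P := by
    rintro x ⟨P, hP, hx⟩
    have : f P = 0 := by
      have := hx.symm
      nth_rewrite 2 [show x = x + 0 by ring] at this
      exact add_left_cancel this
    exact hdisj P hP (Ideal.Quotient.eq_zero_iff_mem.mp this)
  refine ⟨fun x y => ∃ P ∈ Rp, y = x + f P, fun _ _ => Iff.rfl, ?_, ?_, ?_, ?_⟩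
  · refine { trichotomous := fun x y => ?_, irrefl := hirr, trans := ?_ }
    · -- trichotomous
      obtain ⟨S, rfl⟩ := Ideal.Quotient.mk_surjective x
      obtain ⟨T, rfl⟩ := Ideal.Quotient.mk_surjective y
      by_cases hTS : T - S ∈ I
      · exact fun _ _ => (Ideal.Quotient.eq.mpr hTS).symm
      · obtain ⟨P, hP, h | h⟩ := hgauge (T - S) hTS
        · refine fun _ h2 => (h2 ⟨P, hP, ?_⟩).elim
          rw [show f T + f P = f (T + P) by simp [hf]]
          exact Ideal.Quotient.eq.mpr (by rw [show S - (T + P) = -(T - S + P) by ring]; exact neg_mem h)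
        · refine fun h1 _ => (h1 ⟨P, hP, ?_⟩).elim
          rw [show f S + f P = f (S + P) by simp [hf]]
          exact Ideal.Quotient.eq.mpr (by rw [show T - (S + P) = T - S - P by ring]; exact h)
    · -- trans
      rintro x y z ⟨P, hP, rfl⟩ ⟨Q, hQ, rfl⟩
      exact ⟨P + Q, hadd P hP Q hQ, by simp [hf, add_assoc]⟩
  · rintro x y z ⟨P, hP, rfl⟩
    exact ⟨P, hP, by ring⟩
  · rintro x y ⟨P, hP, hx⟩ ⟨Q, hQ, hy⟩
    refine ⟨P * Q, hmul P hP Q hQ, ?_⟩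
    rw [hx, hy]; simp [hf]
  · intro x
    constructor
    · rintro ⟨P, hP, hx⟩; exact ⟨P, hP, by simpa using hx⟩
    · rintro ⟨P, hP, hx⟩; exact ⟨P, hP, by simpa using hx⟩
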